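/- Let u₁, ..., u_ℓ ∈ ℝ^d be mutually orthogonal unit vectors and U = [u₁, ..., u_ℓ] ∈ ℝ^{d×ℓ}. For any vectors z₀, ..., z_{k-1} ∈ ℝ^d, nonnegative reals p₀, ..., p_{k-1} with p₀ > 0, and reals a₁, ..., a_ℓ, we have ‖(I - UUᵀ) z₀‖² ≤ ‖Σ_{i=0}^{k-1} pᵢ zᵢ zᵢᵀ − Σ_{j=1}^{ℓ} aⱼ uⱼ uⱼᵀ‖ / p₀. -/

import Mathlib

open Matrix

noncomputable def opNorm {d : ℕ} (M : Matrix (Fin d) (Fin d) ℝ) : ℝ :=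
  ‖Matrix.toEuclideanCLM (𝕜 := ℝ) M‖

def fromE {d : ℕ} (x : EuclideanSpace ℝ (Fin d)) : Fin d → ℝ :=
  (WithLp.equiv 2 (Fin d → ℝ)) x

noncomputable def toE {d : ℕ} (x : Fin d → ℝ) : EuclideanSpace ℝ (Fin d) :=
  (WithLp.equiv 2 (Fin d → ℝ)).symm x

lemma inner_toE {d : ℕ} (x y : Fin d → ℝ) :
    (inner ℝ (toE x) (toE y) : ℝ) = x ⬝ᵥ y := by
  simp [toE, dotProduct, PiLp.inner_apply, RCLike.inner_apply, mul_comm]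

lemma vecMulVec_mulVec' {d : ℕ} (x y w : Fin d → ℝ) :
    (vecMulVec x y).mulVec w = (y ⬝ᵥ w) • x := by
  ext i
  simp [vecMulVec, mulVec, dotProduct, Finset.mul_sum, mul_assoc, mul_comm, mul_left_comm]

lemma sum_mulVec' {d : ℕ} {ι : Type*} (s : Finset ι) (A : ι → Matrix (Fin d) (Fin d) ℝ)
    (w : Fin d → ℝ) : (∑ i ∈ s, A i).mulVec w = ∑ i ∈ s, (A i).mulVec w := by
  ext j
  simp only [mulVec, dotProduct, Matrix.sum_apply, Finset.sum_apply, Finset.sum_mul]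
  rw [Finset.sum_comm]

lemma dotProduct_sum' {d : ℕ} {ι : Type*} (s : Finset ι) (v : Fin d → ℝ)
    (f : ι → Fin d → ℝ) : v ⬝ᵥ (∑ i ∈ s, f i) = ∑ i ∈ s, v ⬝ᵥ f i := by
  simp [dotProduct, Finset.sum_apply, Finset.mul_sum]
  exact Finset.sum_comm

/-- For mutually orthogonal unit vectors `u₁, ..., u_ℓ` with `U = [u₁, ..., u_ℓ]`,
any vectors `z₀, ..., z_{k-1}`, nonnegative reals `p₀, ..., p_{k-1}` with `p₀ > 0`, and reals
`a₁, ..., a_ℓ`: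
`‖(I - UUᵀ) z₀‖² ≤ ‖Σᵢ pᵢ zᵢ zᵢᵀ − Σⱼ aⱼ uⱼ uⱼᵀ‖ / p₀`. -/
theorem norm_sq_residual_le {d ℓ k : ℕ} [NeZero k]
    (u : Fin ℓ → EuclideanSpace ℝ (Fin d)) (hu : Orthonormal ℝ u)
    (z : Fin k → EuclideanSpace ℝ (Fin d))
    (p : Fin k → ℝ) (hp : ∀ i, 0 ≤ p i) (hp0 : 0 < p 0)
    (a : Fin ℓ → ℝ) :
    ‖toE ((1 - ∑ j, vecMulVec (fromE (u j)) (fromE (u j))).mulVec (fromE (z 0)))‖ ^ 2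
      ≤ opNorm (∑ i, p i • vecMulVec (fromE (z i)) (fromE (z i))
          - ∑ j, a j • vecMulVec (fromE (u j)) (fromE (u j))) / p 0 := by
  set M : Matrix (Fin d) (Fin d) ℝ := ∑ i, p i • vecMulVec (fromE (z i)) (fromE (z i))
          - ∑ j, a j • vecMulVec (fromE (u j)) (fromE (u j)) with hM
  set r : Fin d → ℝ := (1 - ∑ j, vecMulVec (fromE (u j)) (fromE (u j))).mulVec (fromE (z 0)) with hr
  have huu : ∀ i j, fromE (u i) ⬝ᵥ fromE (u j) = if i = j then 1 else 0 := by
    intro i j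
    have h := orthonormal_iff_ite.mp hu i j
    have h2 : (inner ℝ (toE (fromE (u i))) (toE (fromE (u j))) : ℝ) = if i = j then 1 else 0 := h
    rw [inner_toE] at h2
    exact h2
  have hrdef : r = fromE (z 0) - ∑ j, (fromE (u j) ⬝ᵥ fromE (z 0)) • fromE (u j) := by
    rw [hr, Matrix.sub_mulVec, Matrix.one_mulVec]
    congr 1
    rw [sum_mulVec']
    exact Finset.sum_congr rfl fun j _ => vecMulVec_mulVec' _ _ _
  have hur : ∀ j, fromE (u j) ⬝ᵥ r = 0 := by
    intro j
    rw [hrdef, dotProduct_sub, dotProduct_sum']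
    have : ∀ j' ∈ Finset.univ, fromE (u j) ⬝ᵥ ((fromE (u j') ⬝ᵥ fromE (z 0)) • fromE (u j'))
        = if j' = j then fromE (u j) ⬝ᵥ fromE (z 0) else 0 := by
      intro j' _
      rw [dotProduct_smul, huu j j']
      rcases eq_or_ne j' j with h | h
      · simp [h]
      · simp [h, (Ne.symm h : ¬ j = j')]
    rw [Finset.sum_congr rfl this, Finset.sum_ite_eq']
    simp
  have hrz : r ⬝ᵥ fromE (z 0) = r ⬝ᵥ r := by
    have : r ⬝ᵥ (fromE (z 0) - r) = 0 := by
      have h2 : fromE (z 0) - r = ∑ j, (fromE (u j) ⬝ᵥ fromE (z 0)) • fromE (u j) := by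
        rw [hrdef]; abel
      rw [h2, dotProduct_sum']
      apply Finset.sum_eq_zero
      intro j _
      rw [dotProduct_smul, dotProduct_comm r (fromE (u j)), hur j, smul_zero]
    rw [dotProduct_sub] at this
    linarith
  have hMr : r ⬝ᵥ M.mulVec r = ∑ i, p i * (fromE (z i) ⬝ᵥ r) ^ 2 := by
    rw [hM, Matrix.sub_mulVec, dotProduct_sub, sum_mulVec', sum_mulVec',
      dotProduct_sum', dotProduct_sum']
    have h1 : ∀ i ∈ Finset.univ, r ⬝ᵥ (p i • vecMulVec (fromE (z i)) (fromE (z i))).mulVec r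
        = p i * (fromE (z i) ⬝ᵥ r) ^ 2 := by
      intro i _
      rw [Matrix.smul_mulVec, dotProduct_smul, vecMulVec_mulVec', dotProduct_smul,
        dotProduct_comm r (fromE (z i))]
      simp only [smul_eq_mul]
      ring
    have h2 : ∀ j ∈ Finset.univ, r ⬝ᵥ (a j • vecMulVec (fromE (u j)) (fromE (u j))).mulVec r
        = 0 := by
      intro j _
      rw [Matrix.smul_mulVec, dotProduct_smul, vecMulVec_mulVec', dotProduct_smul,
        dotProduct_comm r (fromE (u j)), hur j]
      simp
    rw [Finset.sum_congr rfl h1, Finset.sum_congr rfl h2]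
    simp
  have hnorm : ‖toE r‖ ^ 2 = r ⬝ᵥ r := by
    rw [← inner_toE, real_inner_self_eq_norm_sq]
  have hrrnn : 0 ≤ r ⬝ᵥ r := by
    rw [← hnorm]; positivity
  rcases eq_or_ne (r ⬝ᵥ r) 0 with h0 | h0
  · rw [hnorm, h0]
    exact div_nonneg (norm_nonneg _) hp0.le
  · have hrr : 0 < r ⬝ᵥ r := lt_of_le_of_ne hrrnn (Ne.symm h0)
    have key : p 0 * (r ⬝ᵥ r) ^ 2 ≤ opNorm M * (r ⬝ᵥ r) := by
      have h1 : p 0 * (r ⬝ᵥ r) ^ 2 ≤ r ⬝ᵥ M.mulVec r := by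
        rw [hMr]
        have h := Finset.single_le_sum (f := fun i => p i * (fromE (z i) ⬝ᵥ r) ^ 2)
          (fun i _ => mul_nonneg (hp i) (sq_nonneg _)) (Finset.mem_univ 0)
        rw [dotProduct_comm, hrz] at h
        exact h
      have h2 : r ⬝ᵥ M.mulVec r ≤ opNorm M * (r ⬝ᵥ r) := by
        have hin : r ⬝ᵥ M.mulVec r = (inner ℝ (toE r) (toEuclideanCLM (𝕜 := ℝ) M (toE r)) : ℝ) := by
          have hfe : toEuclideanCLM (𝕜 := ℝ) M (toE r) = toE (M.mulVec r) := rfl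
          rw [hfe, inner_toE, dotProduct_comm]
        rw [hin]
        calc (inner ℝ (toE r) (toEuclideanCLM (𝕜 := ℝ) M (toE r)) : ℝ)
            ≤ ‖toE r‖ * ‖toEuclideanCLM (𝕜 := ℝ) M (toE r)‖ := real_inner_le_norm _ _
          _ ≤ ‖toE r‖ * (opNorm M * ‖toE r‖) :=
              mul_le_mul_of_nonneg_left ((toEuclideanCLM (𝕜 := ℝ) M).le_opNorm _)
                (norm_nonneg _)
          _ = opNorm M * ‖toE r‖ ^ 2 := by ring
          _ = opNorm M * (r ⬝ᵥ r) := by rw [hnorm]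
      linarith
    rw [hnorm, le_div_iff₀ hp0]
    nlinarith [key, hrr]
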